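/- Under the mixture model $Y = \sum_{k=1}^K \delta_k(\langle \beta_k, X\rangle + \varepsilon_k)$ with $E(\varepsilon_k) = 0$, $\mathrm{Var}(\varepsilon_k) = \sigma_k^2$, $(\delta_k)$, $X$, $(\varepsilon_k)$ suitably independent, the mean squared prediction error of the best predictor decomposes as $E[(Y - E(Y\mid X))^2] = \sum_{k=1}^K \pi_k \sigma_k^2 + E\big[\sum_{k=1}^K p_k(X)\big(\sum_{\ell=1}^K p_\ell(X)\langle\beta_k - \beta_\ell, X\rangle\big)^2\big]$, where $p_k(X) = E(\delta_k\mid X)$ and $\pi_k = E(\delta_k)$. -/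

import Mathlib

open MeasureTheory ProbabilityTheory
open scoped Matrix

lemma l2_mul_integrable {Ω : Type*} [MeasureSpace Ω] {f g : Ω → ℝ}
    (hf : MemLp f 2 (volume : Measure Ω)) (hg : MemLp g 2 (volume : Measure Ω)) :
    Integrable (fun ω => f ω * g ω) (volume : Measure Ω) := by
  have h : MemLp (g • f) 1 (volume : Measure Ω) :=
    hf.smul hg
  have := memLp_one_iff_integrable.mp h
  exact (by simpa [smul_eq_mul, mul_comm] using this : Integrable (f * g) (volume : Measure Ω))

lemma indep_transfer {Ω A B : Type*} [MeasureSpace Ω] [MeasurableSpace A] [MeasurableSpace B]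
    {T : Ω → A} {U : Ω → B} (h : IndepFun T U (volume : Measure Ω)) {f g : Ω → ℝ}
    (hf : Measurable[MeasurableSpace.comap T inferInstance] f)
    (hg : Measurable[MeasurableSpace.comap U inferInstance] g) :
    IndepFun f g (volume : Measure Ω) :=
  Kernel.indep_of_indep_of_le_left
    (Kernel.indep_of_indep_of_le_right h (measurable_iff_comap_le.mp hg))
    (measurable_iff_comap_le.mp hf)

theorem best_predictor_mspe_decomposition {Ω : Type*} [MeasureSpace Ω]
    [IsProbabilityMeasure (volume : Measure Ω)] (q K : ℕ)
    (β : Fin K → Fin q → ℝ) (σ2 : Fin K → ℝ)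
    (Δ : Ω → Fin K → ℝ) (X : Ω → Fin q → ℝ) (ε : Fin K → Ω → ℝ) (Y : Ω → ℝ)
    (hΔmeas : Measurable Δ) (hX : Measurable X) (hεmeas : ∀ k, Measurable (ε k))
    (hind : ∀ᵐ ω, ∃ k, ∀ l, Δ ω l = if l = k then (1:ℝ) else 0)
    (hε0 : ∀ k, (∫ ω, ε k ω) = 0) (hεvar : ∀ k, (∫ ω, (ε k ω) ^ 2) = σ2 k)
    (hY2 : MemLp Y 2 (volume : Measure Ω))
    (hX2 : ∀ i, MemLp (fun ω => X ω i) 2 (volume : Measure Ω))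
    (hε2 : ∀ k, MemLp (ε k) 2 (volume : Measure Ω))
    (hindep : ProbabilityTheory.IndepFun
      (fun ω => (X ω, Δ ω)) (fun ω k => ε k ω) (volume : Measure Ω))
    (hiid : ProbabilityTheory.iIndepFun
      (fun k => ε k)
      (volume : Measure Ω))
    (hYdef : ∀ ω, Y ω = ∑ k, Δ ω k * (β k ⬝ᵥ X ω + ε k ω)) :
    (∫ ω, (Y ω - ((volume : Measure Ω)[Y|MeasurableSpace.comap X inferInstance]) ω) ^ 2)
      = (∑ k, (∫ ω, Δ ω k) * σ2 k)
        + ∫ ω, ∑ k,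
            ((volume : Measure Ω)[fun ω' => Δ ω' k|MeasurableSpace.comap X inferInstance]) ω *
            (∑ l, ((volume : Measure Ω)[fun ω' => Δ ω' l|MeasurableSpace.comap X inferInstance]) ω *
              ((fun i => β k i - β l i) ⬝ᵥ X ω)) ^ 2 := by
  set μ : Measure Ω := volume with hμdef
  have hm : MeasurableSpace.comap X inferInstance
      ≤ (MeasureSpace.toMeasurableSpace : MeasurableSpace Ω) := hX.comap_le
  haveI : SigmaFinite (μ.trim hm) := inferInstance
  set p : Fin K → Ω → ℝ := fun k => μ[fun ω' => Δ ω' k|MeasurableSpace.comap X inferInstance]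
    with hp_def
  -- basic measurability
  have hDk : ∀ k, Measurable fun ω => Δ ω k := fun k => (measurable_pi_apply k).comp hΔmeas
  have hXm : Measurable[MeasurableSpace.comap X inferInstance] X := comap_measurable X
  have hBm : ∀ k, Measurable[MeasurableSpace.comap X inferInstance] fun ω => β k ⬝ᵥ X ω := by
    intro k
    show Measurable[MeasurableSpace.comap X inferInstance] fun ω => ∑ i, β k i * X ω i
    exact Finset.measurable_sum _ fun i _ => ((measurable_pi_apply i).comp hXm).const_mul _
  have hBmeas : ∀ k, Measurable fun ω => β k ⬝ᵥ X ω := fun k => (hBm k).mono hm le_rfl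
  -- one-hot facts
  have hΔ01 : ∀ᵐ ω ∂μ, ∀ k, Δ ω k = 0 ∨ Δ ω k = 1 := by
    filter_upwards [hind] with ω hω k
    obtain ⟨k₀, hk₀⟩ := hω
    rw [hk₀ k]
    split <;> simp
  have hΔnn : ∀ k, 0 ≤ᵐ[μ] fun ω => Δ ω k := by
    intro k
    filter_upwards [hΔ01] with ω hω
    rcases hω k with h | h <;> simp [h]
  have hΔle1 : ∀ k, (fun ω => Δ ω k) ≤ᵐ[μ] fun _ => (1:ℝ) := by
    intro k
    filter_upwards [hΔ01] with ω hω
    rcases hω k with h | h <;> simp [h]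
  have hΔnorm : ∀ k, ∀ᵐ ω ∂μ, ‖Δ ω k‖ ≤ 1 := by
    intro k
    filter_upwards [hΔ01] with ω hω
    rcases hω k with h | h <;> simp [h]
  -- MemLp facts
  have bdd_mul2 : ∀ {b h : Ω → ℝ}, MemLp h 2 μ → AEStronglyMeasurable b μ →
      (∀ᵐ ω ∂μ, ‖b ω‖ ≤ 1) → MemLp (fun ω => b ω * h ω) 2 μ := by
    intro b h hh hb hbb
    refine hh.of_le_mul (c := 1) (hb.mul hh.aestronglyMeasurable) ?_
    filter_upwards [hbb] with ω hω
    rw [norm_mul]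
    exact mul_le_mul_of_nonneg_right hω (norm_nonneg _)
  have hΔ2 : ∀ k, MemLp (fun ω => Δ ω k) 2 μ := by
    intro k
    have := bdd_mul2 (memLp_const (1:ℝ)) (hDk k).aestronglyMeasurable (hΔnorm k)
    simpa using this
  have hB2 : ∀ k, MemLp (fun ω => β k ⬝ᵥ X ω) 2 μ := by
    intro k
    have h := memLp_finsetSum' (μ := μ) (p := 2) Finset.univ
      (f := fun (i : Fin q) (ω : Ω) => β k i * X ω i) (fun i _ => (hX2 i).const_mul _)
    have heq : (∑ i : Fin q, fun ω : Ω => β k i * X ω i) = fun ω => β k ⬝ᵥ X ω := by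
      funext ω
      simp [dotProduct, Finset.sum_apply]
    rwa [heq] at h
  have hΔint : ∀ k, Integrable (fun ω => Δ ω k) μ := fun k => (hΔ2 k).integrable one_le_two
  -- conditional probability facts
  have hp_sm : ∀ k, StronglyMeasurable[MeasurableSpace.comap X inferInstance] (p k) := fun k => stronglyMeasurable_condExp
  have hp_meas : ∀ k, Measurable[MeasurableSpace.comap X inferInstance] (p k) := fun k => (hp_sm k).measurable
  have hp_asm : ∀ k, AEStronglyMeasurable (p k) μ :=
    fun k => ((hp_sm k).mono hm).aestronglyMeasurable
  have hp_nonneg : ∀ k, 0 ≤ᵐ[μ] p k := fun k => condExp_nonneg (hΔnn k)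
  have hp_le1 : ∀ k, p k ≤ᵐ[μ] fun _ => (1:ℝ) := by
    intro k
    have h := condExp_mono (m := MeasurableSpace.comap X inferInstance) (hΔint k) (integrable_const (1:ℝ)) (hΔle1 k)
    rwa [condExp_const hm (1:ℝ)] at h
  have hp_norm : ∀ k, ∀ᵐ ω ∂μ, ‖p k ω‖ ≤ 1 := by
    intro k
    filter_upwards [hp_nonneg k, hp_le1 k] with ω h0 h1
    simp only [Pi.zero_apply] at h0
    have h1' : p k ω ≤ 1 := h1
    rw [Real.norm_eq_abs, abs_le]
    constructor <;> linarith
  have hp2 : ∀ k, MemLp (p k) 2 μ := by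
    intro k
    have := bdd_mul2 (memLp_const (1:ℝ)) (hp_asm k) (hp_norm k)
    simpa using this
  have hpsum1 : ∀ᵐ ω ∂μ, ∑ k, p k ω = 1 := by
    have h1 : μ[fun ω => ∑ k, Δ ω k|MeasurableSpace.comap X inferInstance] =ᵐ[μ] μ[fun _ => (1:ℝ)|MeasurableSpace.comap X inferInstance] := by
      apply condExp_congr_ae
      filter_upwards [hind] with ω hω
      obtain ⟨k₀, hk₀⟩ := hω
      simp [hk₀]
    have h2 : μ[fun ω => ∑ k, Δ ω k|MeasurableSpace.comap X inferInstance] =ᵐ[μ] fun ω => ∑ k, p k ω := by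
      have h := condExp_finsetSum (μ := μ) (m := MeasurableSpace.comap X inferInstance) (s := Finset.univ)
        (f := fun k (ω : Ω) => Δ ω k) (fun k _ => hΔint k)
      have e1 : (∑ k : Fin K, fun ω : Ω => Δ ω k) = fun ω => ∑ k, Δ ω k := by
        funext ω; simp [Finset.sum_apply]
      rw [e1] at h
      refine h.trans ?_
      filter_upwards with ω
      simp [Finset.sum_apply, hp_def]
    refine (h2.symm.trans (h1.trans ?_)).mono fun ω hω => hω
    rw [condExp_const hm (1:ℝ)]
  -- independence transfer setup
  have hT : Measurable[MeasurableSpace.comap (fun ω => (X ω, Δ ω)) inferInstance]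
      (fun ω => (X ω, Δ ω)) := comap_measurable _
  have hXT : Measurable[MeasurableSpace.comap (fun ω => (X ω, Δ ω)) inferInstance] X :=
    measurable_fst.comp hT
  have hmT : MeasurableSpace.comap X inferInstance ≤ MeasurableSpace.comap (fun ω => (X ω, Δ ω)) inferInstance := by
    exact measurable_iff_comap_le.mp hXT
  have hΔT : ∀ k, Measurable[MeasurableSpace.comap (fun ω => (X ω, Δ ω)) inferInstance]
      (fun ω => Δ ω k) := fun k => (measurable_pi_apply k).comp (measurable_snd.comp hT)
  have hεU : ∀ k, Measurable[MeasurableSpace.comap (fun ω (k : Fin K) => ε k ω) inferInstance]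
      (ε k) := by
    intro k
    have h := Measurable.comp (measurable_pi_apply k)
      (comap_measurable (fun ω (k : Fin K) => ε k ω))
    exact h
  -- conditional expectation of the noise terms is zero
  have hvint : ∀ k, Integrable (fun ω => Δ ω k * ε k ω) μ :=
    fun k => l2_mul_integrable (hΔ2 k) (hε2 k)
  have hv0 : ∀ k, μ[fun ω => Δ ω k * ε k ω|MeasurableSpace.comap X inferInstance] =ᵐ[μ] fun _ => (0:ℝ) := by
    intro k
    refine (ae_eq_condExp_of_forall_setIntegral_eq hm (hvint k)
      (fun s _ _ => (integrable_const (0:ℝ)).integrableOn)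
      (fun s hs _ => ?_)
      aestronglyMeasurable_const).symm
    have hsm : MeasurableSet s := hm s hs
    have hIndep : IndepFun (fun ω => s.indicator (fun ω' => Δ ω' k) ω) (ε k) μ :=
      indep_transfer hindep ((hΔT k).indicator (hmT s hs)) (hεU k)
    have hintind : Integrable (fun ω => s.indicator (fun ω' => Δ ω' k) ω) μ := by
      simpa using (hΔint k).indicator hsm
    have hmul : (∫ ω, s.indicator (fun ω' => Δ ω' k) ω * ε k ω ∂μ)
        = (∫ ω, s.indicator (fun ω' => Δ ω' k) ω ∂μ) * ∫ ω, ε k ω ∂μ :=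
      hIndep.integral_mul_eq_mul_integral hintind.aestronglyMeasurable ((hε2 k).integrable one_le_two).aestronglyMeasurable
    have e1 : (∫ ω in s, Δ ω k * ε k ω ∂μ)
        = ∫ ω, s.indicator (fun ω' => Δ ω' k) ω * ε k ω ∂μ := by
      rw [← integral_indicator hsm]
      congr 1
      funext ω
      by_cases hωs : ω ∈ s <;> simp [hωs]
    rw [hε0 k, mul_zero] at hmul
    rw [e1, hmul]
    simp
  -- pull-out: conditional expectation of the structural terms
  have huint : ∀ k, Integrable (fun ω => (β k ⬝ᵥ X ω) * Δ ω k) μ :=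
    fun k => l2_mul_integrable (hB2 k) (hΔ2 k)
  have hu : ∀ k, μ[fun ω => (β k ⬝ᵥ X ω) * Δ ω k|MeasurableSpace.comap X inferInstance] =ᵐ[μ] fun ω => (β k ⬝ᵥ X ω) * p k ω := by
    intro k
    have h := condExp_mul_of_stronglyMeasurable_left (μ := μ) (m := MeasurableSpace.comap X inferInstance)
      (f := fun ω => β k ⬝ᵥ X ω) (g := fun ω => Δ ω k)
      (hBm k).stronglyMeasurable (huint k) (hΔint k)
    refine h.trans ?_
    filter_upwards with ω
    simp [hp_def]
  -- conditional expectation of Y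
  have hYint : Integrable Y μ := hY2.integrable one_le_two
  have hG : μ[Y|MeasurableSpace.comap X inferInstance] =ᵐ[μ] fun ω => ∑ k, (β k ⬝ᵥ X ω) * p k ω := by
    have e0 : Y = ∑ k : Fin K, ((fun ω => (β k ⬝ᵥ X ω) * Δ ω k) + fun ω => Δ ω k * ε k ω) := by
      funext ω
      rw [hYdef ω]
      simp only [Finset.sum_apply, Pi.add_apply]
      exact Finset.sum_congr rfl fun k _ => by ring
    have h1 := condExp_finsetSum (μ := μ) (m := MeasurableSpace.comap X inferInstance) (s := Finset.univ)
      (f := fun k => (fun ω => (β k ⬝ᵥ X ω) * Δ ω k) + fun ω => Δ ω k * ε k ω)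
      (fun k _ => (huint k).add (hvint k))
    rw [← e0] at h1
    have h2 : ∀ k : Fin K,
        μ[(fun ω => (β k ⬝ᵥ X ω) * Δ ω k) + fun ω => Δ ω k * ε k ω|MeasurableSpace.comap X inferInstance]
          =ᵐ[μ] fun ω => (β k ⬝ᵥ X ω) * p k ω := by
      intro k
      refine (condExp_add (huint k) (hvint k) _).trans ?_
      filter_upwards [hu k, hv0 k] with ω h1 h2
      simp [h1, h2]
    have h3 : ∀ᵐ ω ∂μ, ∀ k : Fin K,
        (μ[(fun ω => (β k ⬝ᵥ X ω) * Δ ω k) + fun ω => Δ ω k * ε k ω|MeasurableSpace.comap X inferInstance]) ω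
          = (β k ⬝ᵥ X ω) * p k ω := ae_all_iff.mpr fun k => h2 k
    refine h1.trans ?_
    filter_upwards [h3] with ω hω
    simp only [Finset.sum_apply]
    exact Finset.sum_congr rfl fun k _ => hω k
  -- residual decomposition
  set W : Ω → ℝ := fun ω => ∑ k, Δ ω k * (β k ⬝ᵥ X ω) - ∑ k, (β k ⬝ᵥ X ω) * p k ω with hW_def
  set S : Ω → ℝ := fun ω => ∑ k, Δ ω k * ε k ω with hS_def
  have hresid : ∀ᵐ ω ∂μ, Y ω - (μ[Y|MeasurableSpace.comap X inferInstance]) ω = W ω + S ω := by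
    filter_upwards [hG] with ω hω
    rw [hω, hYdef ω, hW_def, hS_def]
    simp only [mul_add, Finset.sum_add_distrib]
    ring
  -- L² facts for W and S
  have hW2 : MemLp W 2 μ := by
    rw [hW_def]
    have h1 : MemLp (fun ω => ∑ k, Δ ω k * (β k ⬝ᵥ X ω)) 2 μ := by
      have h := memLp_finsetSum' (μ := μ) (p := 2) Finset.univ
        (f := fun (k : Fin K) (ω : Ω) => Δ ω k * (β k ⬝ᵥ X ω))
        (fun k _ => bdd_mul2 (hB2 k) (hDk k).aestronglyMeasurable (hΔnorm k))
      have e : (∑ k : Fin K, fun ω : Ω => Δ ω k * (β k ⬝ᵥ X ω))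
          = fun ω => ∑ k, Δ ω k * (β k ⬝ᵥ X ω) := by
        funext ω; simp [Finset.sum_apply]
      rwa [e] at h
    have h2 : MemLp (fun ω => ∑ k, (β k ⬝ᵥ X ω) * p k ω) 2 μ := by
      have h := memLp_finsetSum' (μ := μ) (p := 2) Finset.univ
        (f := fun (k : Fin K) (ω : Ω) => p k ω * (β k ⬝ᵥ X ω))
        (fun k _ => bdd_mul2 (hB2 k) (hp_asm k) (hp_norm k))
      have e : (∑ k : Fin K, fun ω : Ω => p k ω * (β k ⬝ᵥ X ω))
          = fun ω => ∑ k, (β k ⬝ᵥ X ω) * p k ω := by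
        funext ω
        simp only [Finset.sum_apply]
        exact Finset.sum_congr rfl fun k _ => mul_comm _ _
      rwa [e] at h
    exact h1.sub h2
  have hS2 : MemLp S 2 μ := by
    rw [hS_def]
    have h := memLp_finsetSum' (μ := μ) (p := 2) Finset.univ
      (f := fun (k : Fin K) (ω : Ω) => Δ ω k * ε k ω)
      (fun k _ => bdd_mul2 (hε2 k) (hDk k).aestronglyMeasurable (hΔnorm k))
    have e : (∑ k : Fin K, fun ω : Ω => Δ ω k * ε k ω) = fun ω => ∑ k, Δ ω k * ε k ω := by
      funext ω; simp [Finset.sum_apply]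
    rwa [e] at h
  have hWS_int : Integrable (fun ω => W ω * S ω) μ := l2_mul_integrable hW2 hS2
  have hWsq_int : Integrable (fun ω => (W ω) ^ 2) μ := by
    have := l2_mul_integrable hW2 hW2
    simpa [pow_two] using this
  have hSsq_int : Integrable (fun ω => (S ω) ^ 2) μ := by
    have := l2_mul_integrable hS2 hS2
    simpa [pow_two] using this
  -- step 1: replace the residual
  have step1 : (∫ ω, (Y ω - (μ[Y|MeasurableSpace.comap X inferInstance]) ω) ^ 2 ∂μ) = ∫ ω, (W ω + S ω) ^ 2 ∂μ := by
    apply integral_congr_ae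
    filter_upwards [hresid] with ω hω
    rw [hω]
  -- step 2: expand the square
  have step2 : (∫ ω, (W ω + S ω) ^ 2 ∂μ)
      = (∫ ω, (W ω) ^ 2 ∂μ) + (2 * ∫ ω, W ω * S ω ∂μ) + ∫ ω, (S ω) ^ 2 ∂μ := by
    have e : ∀ ω, (W ω + S ω) ^ 2 = (W ω) ^ 2 + 2 * (W ω * S ω) + (S ω) ^ 2 := fun ω => by ring
    have hint1 : Integrable (fun ω => (W ω) ^ 2 + 2 * (W ω * S ω)) μ :=
      hWsq_int.add (hWS_int.const_mul 2)
    simp only [e]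
    rw [integral_add hint1 hSsq_int, integral_add hWsq_int (hWS_int.const_mul 2),
      integral_const_mul]
  -- step 3: the noise part
  have hεsq_int : ∀ k, Integrable (fun ω => (ε k ω) ^ 2) μ := by
    intro k
    have := l2_mul_integrable (hε2 k) (hε2 k)
    simpa [pow_two] using this
  have hΔεsq_int : ∀ k, Integrable (fun ω => Δ ω k * (ε k ω) ^ 2) μ := by
    intro k
    have := l2_mul_integrable (bdd_mul2 (hε2 k) (hDk k).aestronglyMeasurable (hΔnorm k)) (hε2 k)
    simpa [pow_two, mul_assoc] using this
  have step3 : (∫ ω, (S ω) ^ 2 ∂μ) = ∑ k, (∫ ω, Δ ω k ∂μ) * σ2 k := by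
    have h1 : ∀ᵐ ω ∂μ, (S ω) ^ 2 = ∑ k, Δ ω k * (ε k ω) ^ 2 := by
      filter_upwards [hind] with ω hω
      obtain ⟨k₀, hk₀⟩ := hω
      rw [hS_def]
      simp [hk₀, ite_mul]
    rw [integral_congr_ae h1, integral_finset_sum _ fun k _ => hΔεsq_int k]
    refine Finset.sum_congr rfl fun k _ => ?_
    have hIndep : IndepFun (fun ω => Δ ω k) (fun ω => (ε k ω) ^ 2) μ :=
      indep_transfer hindep (hΔT k) ((hεU k).pow_const 2)
    have h := hIndep.integral_mul_eq_mul_integral (hΔint k).aestronglyMeasurable (hεsq_int k).aestronglyMeasurable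
    have h' : (∫ ω, Δ ω k * (ε k ω) ^ 2 ∂μ) = (∫ ω, Δ ω k ∂μ) * ∫ ω, (ε k ω) ^ 2 ∂μ := h
    rw [h', hεvar k]
  -- step 4: the cross term vanishes
  have hWT : Measurable[MeasurableSpace.comap (fun ω => (X ω, Δ ω)) inferInstance] W := by
    rw [hW_def]
    have hB' : ∀ k, Measurable[MeasurableSpace.comap (fun ω => (X ω, Δ ω)) inferInstance]
        (fun ω => β k ⬝ᵥ X ω) := fun k => (hBm k).mono hmT le_rfl
    have hp' : ∀ k, Measurable[MeasurableSpace.comap (fun ω => (X ω, Δ ω)) inferInstance]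
        (p k) := fun k => (hp_meas k).mono hmT le_rfl
    exact Measurable.sub
      (Finset.measurable_sum _ fun k _ => (hΔT k).mul (hB' k))
      (Finset.measurable_sum _ fun k _ => (hB' k).mul (hp' k))
  have step4 : (∫ ω, W ω * S ω ∂μ) = 0 := by
    have e : ∀ ω, W ω * S ω = ∑ k, (W ω * Δ ω k) * ε k ω := by
      intro ω
      rw [hS_def]
      simp only [Finset.mul_sum]
      exact Finset.sum_congr rfl fun k _ => (mul_assoc _ _ _).symm
    have hint : ∀ k, Integrable (fun ω => (W ω * Δ ω k) * ε k ω) μ := by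
      intro k
      have hWΔ : MemLp (fun ω => W ω * Δ ω k) 2 μ :=
        MemLp.ae_eq (Filter.Eventually.of_forall fun ω => mul_comm _ _)
          (bdd_mul2 hW2 (hDk k).aestronglyMeasurable (hΔnorm k))
      exact l2_mul_integrable hWΔ (hε2 k)
    simp only [e]
    rw [integral_finset_sum _ fun k _ => hint k]
    refine Finset.sum_eq_zero fun k _ => ?_
    have hIndep : IndepFun (fun ω => W ω * Δ ω k) (ε k) μ :=
      indep_transfer hindep (hWT.mul (hΔT k)) (hεU k)
    have hWΔint : Integrable (fun ω => W ω * Δ ω k) μ := by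
      have hWΔ : MemLp (fun ω => W ω * Δ ω k) 2 μ :=
        MemLp.ae_eq (Filter.Eventually.of_forall fun ω => mul_comm _ _)
          (bdd_mul2 hW2 (hDk k).aestronglyMeasurable (hΔnorm k))
      exact hWΔ.integrable one_le_two
    have h := hIndep.integral_mul_eq_mul_integral hWΔint.aestronglyMeasurable ((hε2 k).integrable one_le_two).aestronglyMeasurable
    have h' : (∫ ω, (W ω * Δ ω k) * ε k ω ∂μ)
        = (∫ ω, W ω * Δ ω k ∂μ) * ∫ ω, ε k ω ∂μ := h
    rw [h', hε0 k, mul_zero]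
  -- step 5: the structural part
  have hdsub : ∀ (k l : Fin K) ω, (fun i => β k i - β l i) ⬝ᵥ X ω
      = (β k ⬝ᵥ X ω) - (β l ⬝ᵥ X ω) := by
    intro k l ω
    simp [dotProduct, sub_mul, Finset.sum_sub_distrib]
  have hc2 : ∀ k, MemLp (fun ω => ∑ l, p l ω * ((fun i => β k i - β l i) ⬝ᵥ X ω)) 2 μ := by
    intro k
    have h := memLp_finsetSum' (μ := μ) (p := 2) Finset.univ
      (f := fun (l : Fin K) (ω : Ω) => p l ω * ((fun i => β k i - β l i) ⬝ᵥ X ω))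
      (fun l _ => by
        refine bdd_mul2 ?_ (hp_asm l) (hp_norm l)
        have h2 : MemLp (fun ω => (β k ⬝ᵥ X ω) - (β l ⬝ᵥ X ω)) 2 μ := (hB2 k).sub (hB2 l)
        exact MemLp.ae_eq (Filter.Eventually.of_forall fun ω => (hdsub k l ω).symm) h2)
    have e : (∑ l : Fin K, fun ω : Ω => p l ω * ((fun i => β k i - β l i) ⬝ᵥ X ω))
        = fun ω => ∑ l, p l ω * ((fun i => β k i - β l i) ⬝ᵥ X ω) := by
      funext ω; simp [Finset.sum_apply]
    rwa [e] at h
  have hcm : ∀ k, Measurable[MeasurableSpace.comap X inferInstance]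
      (fun ω => ∑ l, p l ω * ((fun i => β k i - β l i) ⬝ᵥ X ω)) := by
    intro k
    refine Finset.measurable_sum _ fun l _ => (hp_meas l).mul ?_
    show Measurable[MeasurableSpace.comap X inferInstance] fun ω => ∑ i, (β k i - β l i) * X ω i
    exact Finset.measurable_sum _ fun i _ => ((measurable_pi_apply i).comp hXm).const_mul _
  have hΔcsq_int : ∀ k, Integrable
      (fun ω => Δ ω k * (∑ l, p l ω * ((fun i => β k i - β l i) ⬝ᵥ X ω)) ^ 2) μ := by
    intro k
    have h := l2_mul_integrable
      (bdd_mul2 (hc2 k) (hDk k).aestronglyMeasurable (hΔnorm k)) (hc2 k)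
    exact h.congr (Filter.Eventually.of_forall fun ω => by ring)
  have hpcsq_int : ∀ k, Integrable
      (fun ω => p k ω * (∑ l, p l ω * ((fun i => β k i - β l i) ⬝ᵥ X ω)) ^ 2) μ := by
    intro k
    have h := l2_mul_integrable
      (bdd_mul2 (hc2 k) (hp_asm k) (hp_norm k)) (hc2 k)
    exact h.congr (Filter.Eventually.of_forall fun ω => by ring)
  have step5 : (∫ ω, (W ω) ^ 2 ∂μ)
      = ∫ ω, ∑ k, p k ω * (∑ l, p l ω * ((fun i => β k i - β l i) ⬝ᵥ X ω)) ^ 2 ∂μ := by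
    have h1 : ∀ᵐ ω ∂μ, (W ω) ^ 2
        = ∑ k, Δ ω k * (∑ l, p l ω * ((fun i => β k i - β l i) ⬝ᵥ X ω)) ^ 2 := by
      filter_upwards [hind, hpsum1] with ω hω hsum
      obtain ⟨k₀, hk₀⟩ := hω
      have hWω : W ω = ∑ l, p l ω * ((fun i => β k₀ i - β l i) ⬝ᵥ X ω) := by
        rw [hW_def]
        simp only [hdsub, mul_sub]
        rw [Finset.sum_sub_distrib, ← Finset.sum_mul, hsum, one_mul]
        simp only [hk₀, ite_mul, one_mul, zero_mul, Finset.sum_ite_eq', Finset.mem_univ,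
          if_true]
        congr 1
        exact Finset.sum_congr rfl fun l _ => mul_comm _ _
      rw [hWω]
      simp [hk₀, ite_mul]
    rw [integral_congr_ae h1, integral_finset_sum _ fun k _ => hΔcsq_int k,
      integral_finset_sum _ fun k _ => hpcsq_int k]
    refine Finset.sum_congr rfl fun k _ => ?_
    -- pull-out of conditional expectation, then tower property
    have hsm : StronglyMeasurable[MeasurableSpace.comap X inferInstance]
        (fun ω => (∑ l, p l ω * ((fun i => β k i - β l i) ⬝ᵥ X ω)) ^ 2) :=
      ((hcm k).pow_const 2).stronglyMeasurable
    have hfg : Integrable ((fun ω => (∑ l, p l ω * ((fun i => β k i - β l i) ⬝ᵥ X ω)) ^ 2)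
        * fun ω => Δ ω k) μ :=
      (hΔcsq_int k).congr (Filter.Eventually.of_forall fun ω => by
        simp only [Pi.mul_apply]; ring)
    have hpull := condExp_mul_of_stronglyMeasurable_left (μ := μ) (m := MeasurableSpace.comap X inferInstance)
      (f := fun ω => (∑ l, p l ω * ((fun i => β k i - β l i) ⬝ᵥ X ω)) ^ 2)
      (g := fun ω => Δ ω k) hsm hfg (hΔint k)
    calc (∫ ω, Δ ω k * (∑ l, p l ω * ((fun i => β k i - β l i) ⬝ᵥ X ω)) ^ 2 ∂μ)
        = ∫ ω, ((fun ω => (∑ l, p l ω * ((fun i => β k i - β l i) ⬝ᵥ X ω)) ^ 2)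
            * fun ω => Δ ω k) ω ∂μ := by
          apply integral_congr_ae
          filter_upwards with ω
          simp [Pi.mul_apply, mul_comm]
      _ = ∫ ω, (μ[(fun ω => (∑ l, p l ω * ((fun i => β k i - β l i) ⬝ᵥ X ω)) ^ 2)
            * fun ω => Δ ω k|MeasurableSpace.comap X inferInstance]) ω ∂μ := (integral_condExp hm).symm
      _ = ∫ ω, p k ω * (∑ l, p l ω * ((fun i => β k i - β l i) ⬝ᵥ X ω)) ^ 2 ∂μ := by
          apply integral_congr_ae
          filter_upwards [hpull] with ω hω
          rw [hω]
          simp [Pi.mul_apply, hp_def, mul_comm]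
  -- assemble
  rw [step1, step2, step3, step4, step5]
  ring
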